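/- arXiv:cs/0506087 — 2 statements merged into one kernel-verified Lean document; each statement's English description precedes it below -/
import Mathlib

section
/- For all integers d ≥ 3 and d^⊥ ≥ 3, N(d, d^⊥) ≥ d + d^⊥. -/
/-- The dual code of a binary linear code `C ⊆ GF(2)^n`. -/
def dualCode {n : ℕ} (C : Submodule (ZMod 2) (Fin n → ZMod 2)) :
    Submodule (ZMod 2) (Fin n → ZMod 2) where
  carrier := {u | ∀ v ∈ C, dotProduct u v = 0}
  zero_mem' := by intro v _; simp
  add_mem' := by
    intro a b ha hb v hv
    rw [Set.mem_setOf_eq] at *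
    rw [add_dotProduct, ha v hv, hb v hv, add_zero]
  smul_mem' := by
    intro c u hu v hv
    rw [Set.mem_setOf_eq] at *
    rw [smul_dotProduct, hu v hv, smul_zero]

/-- The minimum Hamming distance of the code `C` is at least `d`. -/
def MinDistGE {n : ℕ} (C : Submodule (ZMod 2) (Fin n → ZMod 2)) (d : ℕ) : Prop :=
  ∀ c ∈ C, c ≠ 0 → d ≤ hammingNorm c

open Matrix Module Finset

noncomputable def dotForm (n : ℕ) : LinearMap.BilinForm (ZMod 2) (Fin n → ZMod 2) :=
  LinearMap.mk₂ (ZMod 2) dotProduct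
    (fun a b c => add_dotProduct a b c)
    (fun a b c => smul_dotProduct a b c)
    (fun a b c => dotProduct_add a b c)
    (fun a b c => dotProduct_smul a b c)

@[simp] lemma dotForm_apply {n : ℕ} (x y : Fin n → ZMod 2) :
    dotForm n x y = dotProduct x y := rfl

lemma dotForm_refl {n : ℕ} : (dotForm n).IsRefl := by
  intro x y h
  simpa [dotProduct_comm] using h

lemma dotForm_nondegen {n : ℕ} : (dotForm n).Nondegenerate := by
  constructor
  · intro x hx
    funext i
    have := hx (Pi.single i 1)
    simpa [dotProduct_single] using this
  · intro x hx
    funext i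
    have := hx (Pi.single i 1)
    simpa [single_dotProduct] using this

lemma dualCode_eq_orthogonal {n : ℕ} (C : Submodule (ZMod 2) (Fin n → ZMod 2)) :
    dualCode C = (dotForm n).orthogonal C := by
  ext x
  constructor
  · intro hx v hv
    exact dotForm_refl x v (hx v hv)
  · intro hx v hv
    exact dotForm_refl v x (hx v hv)

lemma finrank_dualCode {n : ℕ} (C : Submodule (ZMod 2) (Fin n → ZMod 2)) :
    finrank (ZMod 2) (dualCode C) = n - finrank (ZMod 2) C := by
  rw [dualCode_eq_orthogonal]
  rw [LinearMap.BilinForm.finrank_orthogonal dotForm_nondegen]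
  simp

lemma dualCode_dualCode {n : ℕ} (C : Submodule (ZMod 2) (Fin n → ZMod 2)) :
    dualCode (dualCode C) = C := by
  rw [dualCode_eq_orthogonal, dualCode_eq_orthogonal]
  exact LinearMap.BilinForm.orthogonal_orthogonal dotForm_nondegen dotForm_refl C

lemma zmod2_ne_zero {a : ZMod 2} (h : a ≠ 0) : a = 1 := by
  revert h; revert a; decide

lemma hammingNorm_eq {n : ℕ} (x : Fin n → ZMod 2) :
    hammingNorm x = (univ.filter fun i => x i ≠ 0).card := rfl

lemma eq_of_supp_subset {n : ℕ} {C : Submodule (ZMod 2) (Fin n → ZMod 2)} {c x : Fin n → ZMod 2}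
    (hmin : ∀ y ∈ C, y ≠ 0 → hammingNorm c ≤ hammingNorm y)
    (hx : x ∈ C) (hxne : x ≠ 0) (hsupp : ∀ i, c i = 0 → x i = 0) : x = c := by
  have hsub : (univ.filter fun i => x i ≠ 0) ⊆ (univ.filter fun i => c i ≠ 0) := by
    intro i hi
    simp only [mem_filter, mem_univ, true_and] at *
    intro h0; exact hi (hsupp i h0)
  have heq : (univ.filter fun i => x i ≠ 0) = (univ.filter fun i => c i ≠ 0) :=
    Finset.eq_of_subset_of_card_le hsub (hmin x hx hxne)
  funext i
  by_cases h0 : c i = 0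
  · rw [hsupp i h0, h0]
  · have : i ∈ (univ.filter fun i => x i ≠ 0) := by rw [heq]; simp [h0]
    simp only [mem_filter, mem_univ, true_and] at this
    rw [zmod2_ne_zero this, zmod2_ne_zero h0]

noncomputable def projMap {n : ℕ} (c : Fin n → ZMod 2) :
    (Fin n → ZMod 2) →ₗ[ZMod 2] ({i : Fin n // c i = 0} → ZMod 2) :=
  LinearMap.funLeft (ZMod 2) (ZMod 2) Subtype.val

@[simp] lemma projMap_apply {n : ℕ} (c : Fin n → ZMod 2) (x : Fin n → ZMod 2)
    (i : {i : Fin n // c i = 0}) : projMap c x i = x i := rfl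

lemma singleton_improved {n d : ℕ} (C : Submodule (ZMod 2) (Fin n → ZMod 2))
    (hd : 3 ≤ d) (hC : MinDistGE C d) (hdual : MinDistGE (dualCode C) 3)
    (hk : 0 < finrank (ZMod 2) C) : finrank (ZMod 2) C + d ≤ n := by
  by_contra hcon
  push_neg at hcon
  -- pick a nonzero codeword of minimal weight
  obtain ⟨c0, hc0C, hc0⟩ : ∃ c0 ∈ C, c0 ≠ 0 := by
    by_contra h
    push_neg at h
    have hbot : C = ⊥ := by
      rw [Submodule.eq_bot_iff]; exact h
    rw [hbot] at hk
    simp at hk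
  have hWne : (Set.Nonempty {w | ∃ y ∈ C, y ≠ 0 ∧ hammingNorm y = w}) :=
    ⟨_, c0, hc0C, hc0, rfl⟩
  obtain ⟨x, hxC, hxne, hxw⟩ := Nat.sInf_mem hWne
  have hmin : ∀ y ∈ C, y ≠ 0 → hammingNorm x ≤ hammingNorm y := fun y hy hyne =>
    hxw ▸ Nat.sInf_le ⟨y, hy, hyne, rfl⟩
  have hdw : d ≤ hammingNorm x := hC x hxC hxne
  set w := hammingNorm x with hw
  -- the projection map
  set f := (projMap x).domRestrict C with hf
  -- kernel elements
  have hker : ∀ z : C, z ∈ LinearMap.ker f → (z : Fin n → ZMod 2) = 0 ∨ (z : Fin n → ZMod 2) = x := by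
    intro z hz
    by_cases hz0 : (z : Fin n → ZMod 2) = 0
    · exact Or.inl hz0
    · refine Or.inr (eq_of_supp_subset hmin z.2 hz0 ?_)
      intro i h0
      have := congrFun (LinearMap.mem_ker.mp hz) ⟨i, h0⟩
      simpa [hf] using this
  -- kernel has dimension ≤ 1
  have hker_le : LinearMap.ker f ≤ Submodule.span (ZMod 2) {(⟨x, hxC⟩ : C)} := by
    intro z hz
    rcases hker z hz with h | h
    · have : z = 0 := Subtype.ext h
      rw [this]; exact Submodule.zero_mem _
    · have : z = ⟨x, hxC⟩ := Subtype.ext h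
      rw [this]; exact Submodule.mem_span_singleton_self _
  have hxc_ne : (⟨x, hxC⟩ : C) ≠ 0 := fun h => hxne (congrArg Subtype.val h)
  have hm1 : finrank (ZMod 2) (LinearMap.ker f) ≤ 1 := by
    calc finrank (ZMod 2) (LinearMap.ker f)
        ≤ finrank (ZMod 2) (Submodule.span (ZMod 2) {(⟨x, hxC⟩ : C)}) :=
          Submodule.finrank_mono hker_le
      _ = 1 := finrank_span_singleton hxc_ne
  -- rank-nullity
  have hrn : finrank (ZMod 2) (LinearMap.range f) + finrank (ZMod 2) (LinearMap.ker f)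
      = finrank (ZMod 2) C := LinearMap.finrank_range_add_finrank_ker f
  -- cardinality of the zero set
  have hcS : Fintype.card {i : Fin n // x i = 0} + w = n := by
    rw [Fintype.card_subtype, hw, hammingNorm_eq]
    have := Finset.card_filter_add_card_filter_not (s := (univ : Finset (Fin n)))
      (p := fun i => x i = 0)
    simpa using this
  have hcodomain : finrank (ZMod 2) ({i : Fin n // x i = 0} → ZMod 2)
      = Fintype.card {i : Fin n // x i = 0} := by
    simp
  have hr_le : finrank (ZMod 2) (LinearMap.range f) ≤ Fintype.card {i : Fin n // x i = 0} := by
    rw [← hcodomain]; exact Submodule.finrank_le _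
  have hwn : w ≤ n := by omega
  -- forced equalities
  have hr_eq : finrank (ZMod 2) (LinearMap.range f)
      = Fintype.card {i : Fin n // x i = 0} := by omega
  have hdweq : d = w := by omega
  have hrange : LinearMap.range f = ⊤ :=
    Submodule.eq_top_of_finrank_eq (by rw [hr_eq, hcodomain])
  by_cases hS : ∃ i, x i = 0
  · -- nonempty case: derive contradiction via surjectivity
    obtain ⟨i0, hi0⟩ := hS
    set s : {i : Fin n // x i = 0} := ⟨i0, hi0⟩ with hs
    obtain ⟨z, hzeq⟩ : ∃ z : C, f z = Pi.single s 1 := by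
      have : Pi.single s (1 : ZMod 2) ∈ LinearMap.range f := by rw [hrange]; trivial
      exact this
    set y : Fin n → ZMod 2 := (z : Fin n → ZMod 2) with hy
    have hyval : ∀ i (h : x i = 0), y i = (Pi.single s (1 : ZMod 2) : {i : Fin n // x i = 0} → ZMod 2) ⟨i, h⟩ := by
      intro i h
      have := congrFun hzeq ⟨i, h⟩
      simpa [hf] using this
    have hys : y i0 = 1 := by
      have := hyval i0 hi0
      rwa [Pi.single_eq_same] at this
    have hyne : y ≠ 0 := fun h => by simp [h] at hys
    have hyxne : y + x ≠ 0 := by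
      intro h
      have := congrFun h i0
      simp [hi0, hys] at this
    set A := (univ.filter fun i => x i ≠ 0) with hA
    have hclaim1 : (univ.filter fun i => y i ≠ 0) = insert i0 (A.filter fun i => y i ≠ 0) := by
      ext i
      simp only [mem_filter, mem_univ, true_and, mem_insert, hA]
      constructor
      · intro hyi
        by_cases h0 : x i = 0
        · left
          by_contra hii
          have := hyval i h0
          rw [Pi.single_eq_of_ne (fun hc => hii (congrArg Subtype.val hc))] at this
          exact hyi this
        · right; exact ⟨h0, hyi⟩
      · rintro (rfl | ⟨_, hyi⟩)
        · rw [hys]; exact one_ne_zero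
        · exact hyi
    have hclaim2 : (univ.filter fun i => (y + x) i ≠ 0)
        = insert i0 (A.filter fun i => ¬ y i ≠ 0) := by
      ext i
      simp only [mem_filter, mem_univ, true_and, mem_insert, hA, Pi.add_apply]
      constructor
      · intro hyi
        by_cases h0 : x i = 0
        · left
          by_contra hii
          have := hyval i h0
          rw [Pi.single_eq_of_ne (fun hc => hii (congrArg Subtype.val hc))] at this
          rw [this, h0, add_zero] at hyi
          exact hyi rfl
        · right
          refine ⟨h0, fun hyi' => ?_⟩
          rw [zmod2_ne_zero hyi', zmod2_ne_zero h0] at hyi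
          exact hyi (by decide)
      · rintro (rfl | ⟨h0, hyi⟩)
        · rw [hys, hi0, add_zero]; exact one_ne_zero
        · push_neg at hyi
          rw [hyi, zmod2_ne_zero h0, zero_add]
          exact one_ne_zero
    have hi0A1 : i0 ∉ (A.filter fun i => y i ≠ 0) := by simp [hA, hi0]
    have hi0A2 : i0 ∉ (A.filter fun i => ¬ y i ≠ 0) := by simp [hA, hi0]
    have hcard1 : hammingNorm y = (A.filter fun i => y i ≠ 0).card + 1 := by
      rw [hammingNorm_eq, hclaim1, Finset.card_insert_of_notMem hi0A1]
    have hcard2 : hammingNorm (y + x) = (A.filter fun i => ¬ y i ≠ 0).card + 1 := by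
      rw [hammingNorm_eq, hclaim2, Finset.card_insert_of_notMem hi0A2]
    have hsplit : (A.filter fun i => y i ≠ 0).card + (A.filter fun i => ¬ y i ≠ 0).card
        = A.card := Finset.card_filter_add_card_filter_not _
    have hAcard : A.card = w := by rw [hA, hw, hammingNorm_eq]
    have hb1 : w ≤ hammingNorm y := hmin y z.2 hyne
    have hb2 : w ≤ hammingNorm (y + x) := hmin (y + x) (C.add_mem z.2 hxC) hyxne
    omega
  · -- x has full support: n = w = d, C = {0, x}
    push_neg at hS
    have hn_eq : n = w := by
      have : Fintype.card {i : Fin n // x i = 0} = 0 := by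
        rw [Fintype.card_eq_zero_iff]
        exact ⟨fun i => hS i.1 i.2⟩
      omega
    have hn3 : 3 ≤ n := by omega
    have hCmem : ∀ v ∈ C, v = 0 ∨ v = x := by
      intro v hv
      have : (⟨v, hv⟩ : C) ∈ LinearMap.ker f := by
        rw [LinearMap.mem_ker]
        funext i
        exact absurd i.2 (hS i.1)
      exact hker _ this
    -- weight-2 dual vector
    obtain ⟨i0, i1, hne01⟩ : ∃ i0 i1 : Fin n, i0 ≠ i1 :=
      ⟨⟨0, by omega⟩, ⟨1, by omega⟩, by simp [Fin.ext_iff]⟩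
    set u : Fin n → ZMod 2 := Pi.single i0 1 + Pi.single i1 1 with hu
    have hudual : u ∈ dualCode C := by
      intro v hv
      rcases hCmem v hv with rfl | rfl
      · simp [dotProduct_zero]
      · rw [hu, add_dotProduct, single_dotProduct, single_dotProduct,
          zmod2_ne_zero (hS i0), zmod2_ne_zero (hS i1)]
        decide
    have hune : u ≠ 0 := by
      intro h
      have := congrFun h i0
      rw [hu, Pi.add_apply, Pi.single_eq_same, Pi.single_eq_of_ne hne01, add_zero] at this
      exact one_ne_zero this
    have husupp : (univ.filter fun i => u i ≠ 0) ⊆ {i0, i1} := by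
      intro i hi
      simp only [mem_filter, mem_univ, true_and] at hi
      by_contra hmem
      simp only [mem_insert, mem_singleton] at hmem
      push_neg at hmem
      apply hi
      rw [hu, Pi.add_apply, Pi.single_eq_of_ne hmem.1, Pi.single_eq_of_ne hmem.2, add_zero]
    have hucard : hammingNorm u ≤ 2 := by
      calc hammingNorm u = (univ.filter fun i => u i ≠ 0).card := rfl
        _ ≤ ({i0, i1} : Finset (Fin n)).card := Finset.card_le_card husupp
        _ ≤ 2 := Finset.card_insert_le _ _ |>.trans (by simp)
    have := hdual u hudual hune
    omega

section prev
lemma two_pow_succ' (m : ℕ) : 2 ^ (m + 1) = 2 ^ m + 2 ^ m := by rw [pow_succ, mul_two]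

def plotFun {m : ℕ} (u v : Fin (2 ^ m) → ZMod 2) : Fin (2 ^ (m + 1)) → ZMod 2 :=
  fun i => if h : (i : ℕ) < 2 ^ m then u ⟨i, h⟩
    else v ⟨(i : ℕ) - 2 ^ m, by have h2 := i.2; have h3 := two_pow_succ' m; omega⟩

noncomputable def plotL (m : ℕ) :
    ((Fin (2 ^ m) → ZMod 2) × (Fin (2 ^ m) → ZMod 2)) →ₗ[ZMod 2] (Fin (2 ^ (m + 1)) → ZMod 2) where
  toFun p := plotFun p.1 (p.1 + p.2)
  map_add' p q := by
    funext i
    simp only [plotFun, Pi.add_apply, Prod.fst_add, Prod.snd_add]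
    split <;> ring
  map_smul' c p := by
    funext i
    simp only [plotFun, Pi.add_apply, Pi.smul_apply, Prod.smul_fst, Prod.smul_snd,
      RingHom.id_apply, smul_eq_mul]
    split <;> ring
end prev

noncomputable def RM : (r m : ℕ) → Submodule (ZMod 2) (Fin (2 ^ m) → ZMod 2)
  | _, 0 => ⊤
  | 0, (m+1) => Submodule.map (plotL m) ((RM 0 m).prod ⊥)
  | (r+1), (m+1) => Submodule.map (plotL m) ((RM (r+1) m).prod (RM r m))

lemma RM_zero (r : ℕ) : RM r 0 = ⊤ := by
  cases r <;> rfl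

lemma RM_zero_succ (m : ℕ) : RM 0 (m+1) = Submodule.map (plotL m) ((RM 0 m).prod ⊥) := rfl

lemma RM_succ_succ (r m : ℕ) :
    RM (r+1) (m+1) = Submodule.map (plotL m) ((RM (r+1) m).prod (RM r m)) := rfl

lemma mem_RM_succ_succ {r m : ℕ} {c : Fin (2 ^ (m+1)) → ZMod 2} :
    c ∈ RM (r+1) (m+1) ↔ ∃ u ∈ RM (r+1) m, ∃ v ∈ RM r m, c = plotFun u (u + v) := by
  rw [RM_succ_succ, Submodule.mem_map]
  constructor
  · rintro ⟨⟨u, v⟩, hp, rfl⟩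
    exact ⟨u, hp.1, v, hp.2, rfl⟩
  · rintro ⟨u, hu, v, hv, rfl⟩
    exact ⟨(u, v), ⟨hu, hv⟩, rfl⟩

lemma mem_RM_zero_succ {m : ℕ} {c : Fin (2 ^ (m+1)) → ZMod 2} :
    c ∈ RM 0 (m+1) ↔ ∃ u ∈ RM 0 m, c = plotFun u u := by
  rw [RM_zero_succ, Submodule.mem_map]
  constructor
  · rintro ⟨⟨u, v⟩, hp, rfl⟩
    have hv : v = 0 := hp.2
    refine ⟨u, hp.1, ?_⟩
    simp [hv, plotL]
  · rintro ⟨u, hu, rfl⟩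
    exact ⟨(u, 0), ⟨hu, rfl⟩, by simp [plotL]⟩

section prev2
def idxL {m : ℕ} (j : Fin (2 ^ m)) : Fin (2 ^ (m + 1)) :=
  ⟨(j : ℕ), by have := j.2; have h3 := two_pow_succ' m; omega⟩

def idxR {m : ℕ} (j : Fin (2 ^ m)) : Fin (2 ^ (m + 1)) :=
  ⟨2 ^ m + (j : ℕ), by have := j.2; have h3 := two_pow_succ' m; omega⟩

@[simp] lemma plotFun_idxL {m : ℕ} (u v : Fin (2 ^ m) → ZMod 2) (j : Fin (2 ^ m)) :
    plotFun u v (idxL j) = u j := by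
  simp only [plotFun, idxL]
  simp

@[simp] lemma plotFun_idxR {m : ℕ} (u v : Fin (2 ^ m) → ZMod 2) (j : Fin (2 ^ m)) :
    plotFun u v (idxR j) = v j := by
  simp only [plotFun, idxR]
  simp

lemma sum_split_gen {M : Type*} [AddCommMonoid M] {a b N : ℕ} (h : N = a + b) (g : Fin N → M) :
    ∑ i, g i = (∑ j : Fin a, g ⟨(j : ℕ), by have := j.2; omega⟩)
      + ∑ j : Fin b, g ⟨a + (j : ℕ), by have := j.2; omega⟩ := by
  subst h
  rw [Fin.sum_univ_add]
  rfl

lemma sum_split {M : Type*} [AddCommMonoid M] {m : ℕ} (g : Fin (2 ^ (m + 1)) → M) :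
    ∑ i, g i = (∑ j : Fin (2 ^ m), g (idxL j)) + ∑ j : Fin (2 ^ m), g (idxR j) :=
  sum_split_gen (two_pow_succ' m) g

lemma hammingNorm_eq_sum {ι : Type*} [Fintype ι] (x : ι → ZMod 2) :
    hammingNorm x = ∑ i, if x i ≠ 0 then 1 else 0 := by
  rw [hammingNorm, Finset.card_filter]

lemma plotFun_norm {m : ℕ} (u v : Fin (2 ^ m) → ZMod 2) :
    hammingNorm (plotFun u v) = hammingNorm u + hammingNorm v := by
  rw [hammingNorm_eq_sum, hammingNorm_eq_sum u, hammingNorm_eq_sum v, sum_split]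
  simp

lemma plotFun_dot {m : ℕ} (u v x y : Fin (2 ^ m) → ZMod 2) :
    dotProduct (plotFun u v) (plotFun x y) = dotProduct u x + dotProduct v y := by
  rw [show dotProduct (plotFun u v) (plotFun x y) = ∑ i, plotFun u v i * plotFun x y i from rfl,
    sum_split]
  simp [dotProduct]

lemma plotFun_inj {m : ℕ} {u v x y : Fin (2 ^ m) → ZMod 2}
    (h : plotFun u v = plotFun x y) : u = x ∧ v = y := by
  constructor
  · funext j; have := congrFun h (idxL j); simpa using this
  · funext j; have := congrFun h (idxR j); simpa using this
end prev2

lemma zmod2_add_self (a : ZMod 2) : a + a = 0 := by revert a; decide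

lemma RM_orth : ∀ m r s, r + s + 1 ≤ m → ∀ c ∈ RM r m, ∀ c' ∈ RM s m,
    dotProduct c c' = 0 := by
  intro m
  induction m with
  | zero => intro r s h; omega
  | succ m ih =>
    intro r s h c hc c' hc'
    match r, s with
    | 0, 0 =>
      obtain ⟨u, hu, rfl⟩ := mem_RM_zero_succ.mp hc
      obtain ⟨x, hx, rfl⟩ := mem_RM_zero_succ.mp hc'
      rw [plotFun_dot]
      exact zmod2_add_self _
    | 0, s+1 =>
      obtain ⟨u, hu, rfl⟩ := mem_RM_zero_succ.mp hc
      obtain ⟨x, hx, y, hy, rfl⟩ := mem_RM_succ_succ.mp hc'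
      rw [plotFun_dot, dotProduct_add, ← add_assoc, zmod2_add_self, zero_add]
      exact ih 0 s (by omega) u hu y hy
    | r+1, 0 =>
      obtain ⟨u, hu, v, hv, rfl⟩ := mem_RM_succ_succ.mp hc
      obtain ⟨x, hx, rfl⟩ := mem_RM_zero_succ.mp hc'
      rw [plotFun_dot, add_dotProduct, ← add_assoc, zmod2_add_self, zero_add]
      exact ih r 0 (by omega) v hv x hx
    | r+1, s+1 =>
      obtain ⟨u, hu, v, hv, rfl⟩ := mem_RM_succ_succ.mp hc
      obtain ⟨x, hx, y, hy, rfl⟩ := mem_RM_succ_succ.mp hc'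
      rw [plotFun_dot, add_dotProduct, dotProduct_add, dotProduct_add,
        ih (r+1) s (by omega) u hu y hy,
        ih r (s+1) (by omega) v hv x hx,
        ih r s (by omega) v hv y hy]
      simp [zmod2_add_self]

lemma plotL_inj (m : ℕ) : Function.Injective (plotL m) := by
  intro p q h
  obtain ⟨h1, h2⟩ := plotFun_inj h
  have h3 : p.2 = q.2 := by
    have := h2
    rw [h1] at this
    exact add_left_cancel this
  exact Prod.ext h1 h3

noncomputable def subProdEquiv {M N : Type*} [AddCommGroup M] [AddCommGroup N]
    [Module (ZMod 2) M] [Module (ZMod 2) N]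
    (A : Submodule (ZMod 2) M) (B : Submodule (ZMod 2) N) :
    (A.prod B) ≃ₗ[ZMod 2] A × B where
  toFun x := (⟨x.1.1, x.2.1⟩, ⟨x.1.2, x.2.2⟩)
  invFun p := ⟨(p.1.1, p.2.1), ⟨p.1.2, p.2.2⟩⟩
  map_add' _ _ := rfl
  map_smul' _ _ := rfl
  left_inv _ := rfl
  right_inv _ := rfl

lemma finrank_prod_sub {n₁ n₂ : ℕ} (A : Submodule (ZMod 2) (Fin n₁ → ZMod 2))
    (B : Submodule (ZMod 2) (Fin n₂ → ZMod 2)) :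
    finrank (ZMod 2) (A.prod B) = finrank (ZMod 2) A + finrank (ZMod 2) B := by
  rw [(subProdEquiv A B).finrank_eq]
  exact Module.finrank_prod

lemma finrank_map_plotL {m : ℕ} (W : Submodule (ZMod 2)
    ((Fin (2 ^ m) → ZMod 2) × (Fin (2 ^ m) → ZMod 2))) :
    finrank (ZMod 2) (Submodule.map (plotL m) W) = finrank (ZMod 2) W :=
  (Submodule.equivMapOfInjective _ (plotL_inj m) W).finrank_eq.symm

lemma pascal_sum (m r : ℕ) : ∑ i ∈ range (r+2), (m+1).choose i
    = ∑ i ∈ range (r+2), m.choose i + ∑ i ∈ range (r+1), m.choose i := by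
  rw [Finset.sum_range_succ' (fun i => (m+1).choose i) (r+1),
    Finset.sum_range_succ' (fun i => m.choose i) (r+1)]
  simp only [Nat.choose_succ_succ, Nat.choose_zero_right]
  rw [Finset.sum_add_distrib]
  simp only [Nat.succ_eq_add_one]
  omega

lemma RM_finrank : ∀ m r, finrank (ZMod 2) (RM r m) = ∑ i ∈ range (r+1), m.choose i := by
  intro m
  induction m with
  | zero =>
    intro r
    rw [RM_zero, finrank_top]
    have h1 : finrank (ZMod 2) (Fin (2^0) → ZMod 2) = 1 := by simp
    rw [h1]
    rw [Finset.sum_eq_single 0]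
    · simp
    · intro i _ hi
      rcases Nat.exists_eq_succ_of_ne_zero hi with ⟨j, rfl⟩
      simp
    · simp
  | succ m ih =>
    intro r
    match r with
    | 0 =>
      rw [RM_zero_succ, finrank_map_plotL, finrank_prod_sub, ih 0]
      simp
    | r+1 =>
      rw [RM_succ_succ, finrank_map_plotL, finrank_prod_sub, ih (r+1), ih r, ← pascal_sum]

lemma plotFun_zero {m : ℕ} : plotFun (0 : Fin (2^m) → ZMod 2) 0 = 0 := by
  funext i
  simp only [plotFun]
  split <;> rfl

lemma zmod2_sub_eq_add (a b : ZMod 2) : a - b = b + a := by revert a b; decide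

lemma norm_triangle {k : ℕ} (u v : Fin k → ZMod 2) :
    hammingNorm v ≤ hammingNorm u + hammingNorm (u + v) := by
  have h := hammingDist_triangle v u 0
  rw [hammingDist_zero_right, hammingDist_zero_right] at h
  have h2 : hammingDist v u = hammingNorm (u + v) := by
    rw [hammingDist_eq_hammingNorm]
    congr 1
    funext i
    simp only [Pi.add_apply, Pi.neg_apply]; generalize u i = a; generalize v i = b; revert a b; decide
  rw [h2] at h
  omega

lemma RM_dist : ∀ m r, ∀ c ∈ RM r m, c ≠ 0 → 2 ^ (m - r) ≤ hammingNorm c := by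
  intro m
  induction m with
  | zero =>
    intro r c _ hc
    have h := hammingNorm_pos_iff.2 hc
    simp only [Nat.zero_sub, pow_zero]
    omega
  | succ m ih =>
    intro r c hc hcne
    match r with
    | 0 =>
      obtain ⟨u, hu, rfl⟩ := mem_RM_zero_succ.mp hc
      have hune : u ≠ 0 := by
        rintro rfl
        exact hcne plotFun_zero
      have := ih 0 u hu hune
      rw [plotFun_norm]
      have h3 := two_pow_succ' m
      simp only [Nat.sub_zero] at *
      omega
    | r+1 =>
      obtain ⟨u, hu, v, hv, rfl⟩ := mem_RM_succ_succ.mp hc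
      by_cases hv0 : v = 0
      · subst hv0
        rw [add_zero] at hcne ⊢
        have hune : u ≠ 0 := by
          rintro rfl
          exact hcne plotFun_zero
        have h1 := ih (r+1) u hu hune
        rw [plotFun_norm]
        have h2 : 2 ^ (m + 1 - (r+1)) ≤ 2 ^ (m - (r+1)) + 2 ^ (m - (r+1)) := by
          rw [← two_pow_succ']
          exact Nat.pow_le_pow_right (by norm_num) (by omega)
        omega
      · have h1 := ih r v hv hv0
        have h2 := norm_triangle u v
        rw [plotFun_norm]
        have h3 : m + 1 - (r + 1) = m - r := by omega
        rw [h3]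
        omega


lemma RM_self_dual (r : ℕ) : dualCode (RM r (2*r+1)) = RM r (2*r+1) := by
  have hle : RM r (2*r+1) ≤ dualCode (RM r (2*r+1)) := fun c hc v hv =>
    RM_orth (2*r+1) r r (by omega) c hc v hv
  have hfr : finrank (ZMod 2) (RM r (2*r+1)) = 4 ^ r := by
    rw [RM_finrank]
    exact Nat.sum_range_choose_halfway r
  have hpow : (2:ℕ) ^ (2*r+1) = 4 ^ r + 4 ^ r := by
    rw [pow_succ, pow_mul]
    norm_num
    omega
  have hdual_fr : finrank (ZMod 2) (dualCode (RM r (2*r+1))) = 4 ^ r := by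
    rw [finrank_dualCode, hfr, hpow]
    omega
  exact (Submodule.eq_of_le_of_finrank_le hle (by rw [hfr, hdual_fr])).symm

lemma exists_good_code (d dp : ℕ) (hd : 3 ≤ d) (hdp : 3 ≤ dp) :
    ∃ n, ∃ C : Submodule (ZMod 2) (Fin n → ZMod 2),
      0 < finrank (ZMod 2) C ∧ finrank (ZMod 2) C < n ∧
      MinDistGE C d ∧ MinDistGE (dualCode C) dp := by
  set r := max d dp with hr
  refine ⟨2 ^ (2*r+1), RM r (2*r+1), ?_, ?_, ?_, ?_⟩
  · rw [RM_finrank, Nat.sum_range_choose_halfway r]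
    positivity
  · rw [RM_finrank, Nat.sum_range_choose_halfway r]
    have hpow : (2:ℕ) ^ (2*r+1) = 4 ^ r + 4 ^ r := by
      rw [pow_succ, pow_mul]
      norm_num
      omega
    have : 0 < (4:ℕ) ^ r := by positivity
    omega
  · intro c hc hcne
    have h1 := RM_dist (2*r+1) r c hc hcne
    have h2 : 2*r+1-r = r + 1 := by omega
    rw [h2] at h1
    have h3 : d ≤ 2 ^ (r+1) := by
      have h4 : r < 2 ^ r := Nat.lt_two_pow_self
      have h5 : (2:ℕ) ^ (r+1) = 2 ^ r + 2 ^ r := by rw [pow_succ]; omega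
      have h6 : d ≤ r := le_max_left d dp
      omega
    omega
  · rw [RM_self_dual]
    intro c hc hcne
    have h1 := RM_dist (2*r+1) r c hc hcne
    have h2 : 2*r+1-r = r + 1 := by omega
    rw [h2] at h1
    have h3 : dp ≤ 2 ^ (r+1) := by
      have h4 : r < 2 ^ r := Nat.lt_two_pow_self
      have h5 : (2:ℕ) ^ (r+1) = 2 ^ r + 2 ^ r := by rw [pow_succ]; omega
      have h6 : dp ≤ r := le_max_right d dp
      omega
    omega

lemma length_lb {n d dp : ℕ} (hd : 3 ≤ d) (hdp : 3 ≤ dp)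
    {C : Submodule (ZMod 2) (Fin n → ZMod 2)} (h1 : 0 < finrank (ZMod 2) C)
    (h2 : finrank (ZMod 2) C < n) (h3 : MinDistGE C d) (h4 : MinDistGE (dualCode C) dp) :
    d + dp ≤ n := by
  have hA := singleton_improved C hd h3 (fun c hc h => le_trans hdp (h4 c hc h)) h1
  have hdd : MinDistGE (dualCode (dualCode C)) 3 := by
    rw [dualCode_dualCode]
    exact fun c hc h => le_trans hd (h3 c hc h)
  have hpos : 0 < finrank (ZMod 2) (dualCode C) := by
    rw [finrank_dualCode]
    omega
  have hB := singleton_improved (dualCode C) hdp h4 hdd hpos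
  rw [finrank_dualCode] at hB
  omega

/-- `N d d⊥` is the minimum length `n` for which there exists a binary linear code of
length `n` (a subspace `C` of `GF(2)^n` with `0 < dim C < n`) with minimum Hamming
distance at least `d` and dual distance at least `d⊥`. -/
noncomputable def N (d dp : ℕ) : ℕ :=
  sInf {n | ∃ C : Submodule (ZMod 2) (Fin n → ZMod 2),
    0 < Module.finrank (ZMod 2) C ∧ Module.finrank (ZMod 2) C < n ∧
    MinDistGE C d ∧ MinDistGE (dualCode C) dp}

theorem N_ge_improved_singleton (d dp : ℕ) (hd : 3 ≤ d) (hdp : 3 ≤ dp) :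
    N d dp ≥ d + dp := by
  rw [ge_iff_le, N]
  apply le_csInf
  · obtain ⟨n, C, h1, h2, h3, h4⟩ := exists_good_code d dp hd hdp
    exact ⟨n, C, h1, h2, h3, h4⟩
  · rintro n ⟨C, h1, h2, h3, h4⟩
    exact length_lb hd hdp h1 h2 h3 h4
end

section
/- N(3, 3) = 6; that is, 6 is the minimum length n for which there exists a binary linear code of length n with minimum Hamming distance at least 3 and dual distance at least 3 (attained by the [6,3,3] shortened Hamming code). -/
/-! ### Auxiliary material for the proof -/

instance : Fact (Nat.Prime 2) := ⟨Nat.prime_two⟩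

/-! #### The `[6,3,3]` shortened Hamming code, given by its full list of codewords -/

def inC6 (x : Fin 6 → ZMod 2) : Prop :=
  x = ![0,0,0,0,0,0] ∨ x = ![1,0,0,0,1,1] ∨ x = ![0,1,0,1,0,1] ∨ x = ![0,0,1,1,1,0] ∨
  x = ![1,1,0,1,1,0] ∨ x = ![1,0,1,1,0,1] ∨ x = ![0,1,1,0,1,1] ∨ x = ![1,1,1,0,0,0]

instance : DecidablePred inC6 := fun x => by unfold inC6; infer_instance

set_option maxRecDepth 1000000 in
def C6 : Submodule (ZMod 2) (Fin 6 → ZMod 2) where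
  carrier := {x | inC6 x}
  zero_mem' := by show inC6 _; decide
  add_mem' := by
    intro a b ha hb; revert ha hb
    show inC6 a → inC6 b → inC6 (a + b); revert a b; decide
  smul_mem' := by
    intro c u hu; revert hu
    show inC6 u → inC6 (c • u); revert c u; decide

set_option maxRecDepth 1000000 in
lemma md1 : MinDistGE C6 3 := by
  intro c hc hne
  have h : inC6 c := hc
  clear hc
  revert hne h; revert c
  decide

set_option maxRecDepth 1000000 in
lemma md2 : MinDistGE (dualCode C6) 3 := by
  intro c hc hne
  have h : ∀ v : Fin 6 → ZMod 2, inC6 v → dotProduct c v = 0 := fun v hv => hc v hv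
  clear hc
  revert hne h; revert c
  decide

lemma fr1 : 0 < Module.finrank (ZMod 2) C6 := by
  rw [Module.finrank_pos_iff]
  exact ⟨⟨![1,0,0,0,1,1], by show inC6 _; decide⟩, 0, by
    intro h
    have h2 : (![1,0,0,0,1,1] : Fin 6 → ZMod 2) = 0 := congrArg Subtype.val h
    exact absurd (congrFun h2 0) (by decide)⟩

lemma fr2 : Module.finrank (ZMod 2) C6 < 6 := by
  have h : C6 ≠ ⊤ := by
    intro h
    have : (![1,0,0,0,0,0] : Fin 6 → ZMod 2) ∈ C6 := h ▸ Submodule.mem_top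
    have h2 : inC6 ![1,0,0,0,0,0] := this
    revert h2; decide
  have := Submodule.finrank_lt (K := ZMod 2) (V := Fin 6 → ZMod 2) h
  simpa using this

/-! #### Helpers for the nonexistence part -/

section helpers
variable {n k : ℕ} {C : Submodule (ZMod 2) (Fin n → ZMod 2)}

/-- dot product with `u` as a linear map in the second argument -/
noncomputable def dotL (u : Fin n → ZMod 2) : (Fin n → ZMod 2) →ₗ[ZMod 2] ZMod 2 where
  toFun v := dotProduct u v
  map_add' x y := dotProduct_add u x y
  map_smul' c x := by simp [dotProduct_smul, smul_eq_mul]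

lemma dual_mem_of_basis (b : Module.Basis (Fin k) (ZMod 2) C) (u : Fin n → ZMod 2)
    (h : ∀ i, dotProduct u ((b i : C) : Fin n → ZMod 2) = 0) : u ∈ dualCode C := by
  intro v hv
  have hv3 : v = ∑ i, b.repr ⟨v, hv⟩ i • ((b i : C) : Fin n → ZMod 2) := by
    have h2 := b.sum_repr ⟨v, hv⟩
    have h3 := congrArg (Submodule.subtype C) h2
    rw [map_sum] at h3
    simpa using h3.symm
  have : dotProduct u v = dotL u v := rfl
  rw [this, hv3, map_sum]
  simp only [map_smul, smul_eq_mul]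
  have : ∀ i, dotL u ((b i : C) : Fin n → ZMod 2) = 0 := h
  simp [this]

lemma basis_one_ne (b : Module.Basis (Fin k) (ZMod 2) C) (i : Fin k) :
    ((b i : C) : Fin n → ZMod 2) ≠ 0 := by
  rw [Ne, Submodule.coe_eq_zero]
  exact b.ne_zero i

lemma basis_two_ne (b : Module.Basis (Fin k) (ZMod 2) C) {i j : Fin k} (hij : i ≠ j) :
    ((b i : C) : Fin n → ZMod 2) + ((b j : C) : Fin n → ZMod 2) ≠ 0 := by
  have : ((b i + b j : C) : Fin n → ZMod 2) = (b i : C) + (b j : C) := rfl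
  rw [← this, Ne, Submodule.coe_eq_zero]
  intro h
  have h2 := congrArg (fun x => b.repr x i) h
  simp [Finsupp.single_apply, hij, hij.symm] at h2

lemma basis_three_ne (b : Module.Basis (Fin k) (ZMod 2) C) {i j l : Fin k}
    (hij : i ≠ j) (hil : i ≠ l) (_hjl : j ≠ l) :
    ((b i : C) : Fin n → ZMod 2) + ((b j : C) : Fin n → ZMod 2)
      + ((b l : C) : Fin n → ZMod 2) ≠ 0 := by
  have : ((b i + b j + b l : C) : Fin n → ZMod 2) = (b i : C) + (b j : C) + (b l : C) := rfl
  rw [← this, Ne, Submodule.coe_eq_zero]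
  intro h
  have h2 := congrArg (fun x => b.repr x i) h
  simp [Finsupp.single_apply, hij, hij.symm, hil, hil.symm] at h2

lemma hammingNorm_le_n (x : Fin n → ZMod 2) : hammingNorm x ≤ n := by
  have := Finset.card_filter_le (Finset.univ : Finset (Fin n)) (fun i => x i ≠ 0)
  simpa [hammingNorm] using this

end helpers

section cases
variable {n : ℕ} {C : Submodule (ZMod 2) (Fin n → ZMod 2)}

lemma case_dim1 (hk : Module.finrank (ZMod 2) C = 1) (hC : MinDistGE C 3)
    (hD : MinDistGE (dualCode C) 3) :
    ∃ a : Fin n → ZMod 2, 3 ≤ hammingNorm a ∧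
      ∀ u : Fin n → ZMod 2, dotProduct u a = 0 → u ≠ 0 → 3 ≤ hammingNorm u := by
  let b := Module.finBasisOfFinrankEq (ZMod 2) C hk
  refine ⟨(b 0 : C), hC _ (b 0).2 (basis_one_ne b 0), ?_⟩
  intro u hu hne
  exact hD u (dual_mem_of_basis b u (fun i => by fin_cases i; exact hu)) hne

lemma case_dim2 (hk : Module.finrank (ZMod 2) C = 2) (hC : MinDistGE C 3)
    (hD : MinDistGE (dualCode C) 3) :
    ∃ a b : Fin n → ZMod 2, 3 ≤ hammingNorm a ∧ 3 ≤ hammingNorm b ∧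
      3 ≤ hammingNorm (a + b) ∧
      ∀ u : Fin n → ZMod 2, dotProduct u a = 0 → dotProduct u b = 0 →
        u ≠ 0 → 3 ≤ hammingNorm u := by
  let b := Module.finBasisOfFinrankEq (ZMod 2) C hk
  refine ⟨(b 0 : C), (b 1 : C),
    hC _ (b 0).2 (basis_one_ne b 0), hC _ (b 1).2 (basis_one_ne b 1),
    hC _ (C.add_mem (b 0).2 (b 1).2) (basis_two_ne b (by decide)), ?_⟩
  intro u hu0 hu1 hne
  refine hD u (dual_mem_of_basis b u (fun i => ?_)) hne
  fin_cases i
  · exact hu0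
  · exact hu1

lemma case_dim3 (hk : 3 ≤ Module.finrank (ZMod 2) C) (hC : MinDistGE C 3) :
    ∃ a b c : Fin n → ZMod 2, 3 ≤ hammingNorm a ∧ 3 ≤ hammingNorm b ∧
      3 ≤ hammingNorm c ∧ 3 ≤ hammingNorm (a + b) ∧ 3 ≤ hammingNorm (a + c) ∧
      3 ≤ hammingNorm (b + c) ∧ 3 ≤ hammingNorm (a + b + c) := by
  let b := Module.finBasis (ZMod 2) C
  set m := Module.finrank (ZMod 2) C with hm
  let i0 : Fin m := ⟨0, by omega⟩
  let i1 : Fin m := ⟨1, by omega⟩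
  let i2 : Fin m := ⟨2, by omega⟩
  have h01 : i0 ≠ i1 := by simp [i0, i1, Fin.ext_iff]
  have h02 : i0 ≠ i2 := by simp [i0, i2, Fin.ext_iff]
  have h12 : i1 ≠ i2 := by simp [i1, i2, Fin.ext_iff]
  refine ⟨(b i0 : C), (b i1 : C), (b i2 : C),
    hC _ (b i0).2 (basis_one_ne b i0), hC _ (b i1).2 (basis_one_ne b i1),
    hC _ (b i2).2 (basis_one_ne b i2),
    hC _ (C.add_mem (b i0).2 (b i1).2) (basis_two_ne b h01),
    hC _ (C.add_mem (b i0).2 (b i2).2) (basis_two_ne b h02),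
    hC _ (C.add_mem (b i1).2 (b i2).2) (basis_two_ne b h12),
    hC _ (C.add_mem (C.add_mem (b i0).2 (b i1).2) (b i2).2)
      (basis_three_ne b h01 h02 h12)⟩

lemma case_dim2' (hk : 2 ≤ Module.finrank (ZMod 2) C) (hC : MinDistGE C 3) :
    ∃ a b : Fin n → ZMod 2, 3 ≤ hammingNorm a ∧ 3 ≤ hammingNorm b ∧
      3 ≤ hammingNorm (a + b) := by
  let b := Module.finBasis (ZMod 2) C
  set m := Module.finrank (ZMod 2) C with hm
  let i0 : Fin m := ⟨0, by omega⟩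
  let i1 : Fin m := ⟨1, by omega⟩
  have h01 : i0 ≠ i1 := by simp [i0, i1, Fin.ext_iff]
  exact ⟨(b i0 : C), (b i1 : C),
    hC _ (b i0).2 (basis_one_ne b i0), hC _ (b i1).2 (basis_one_ne b i1),
    hC _ (C.add_mem (b i0).2 (b i1).2) (basis_two_ne b h01)⟩

end cases

set_option maxRecDepth 1000000 in
lemma L1 : ∀ a : Fin 3 → ZMod 2, ¬(3 ≤ hammingNorm a ∧ ∀ u : Fin 3 → ZMod 2, dotProduct u a = 0 → u ≠ 0 → 3 ≤ hammingNorm u) := by decide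
set_option maxRecDepth 1000000 in
lemma L2 : ∀ a : Fin 4 → ZMod 2, ¬(3 ≤ hammingNorm a ∧ ∀ u : Fin 4 → ZMod 2, dotProduct u a = 0 → u ≠ 0 → 3 ≤ hammingNorm u) := by decide
set_option maxRecDepth 1000000 in
lemma L3 : ∀ a : Fin 5 → ZMod 2, ¬(3 ≤ hammingNorm a ∧ ∀ u : Fin 5 → ZMod 2, dotProduct u a = 0 → u ≠ 0 → 3 ≤ hammingNorm u) := by decide
set_option maxRecDepth 1000000 in
lemma L4 : ∀ a b : Fin 5 → ZMod 2, ¬(3 ≤ hammingNorm a ∧ 3 ≤ hammingNorm b ∧ 3 ≤ hammingNorm (a+b) ∧ ∀ u : Fin 5 → ZMod 2, dotProduct u a = 0 → dotProduct u b = 0 → u ≠ 0 → 3 ≤ hammingNorm u) := by decide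
set_option maxRecDepth 1000000 in
lemma L5 : ∀ a b : Fin 3 → ZMod 2, ¬(3 ≤ hammingNorm a ∧ 3 ≤ hammingNorm b ∧ 3 ≤ hammingNorm (a+b)) := by decide
set_option maxRecDepth 1000000 in
lemma L6 : ∀ a b : Fin 4 → ZMod 2, ¬(3 ≤ hammingNorm a ∧ 3 ≤ hammingNorm b ∧ 3 ≤ hammingNorm (a+b)) := by decide
set_option maxRecDepth 1000000 in
lemma L7 : ∀ a b c : Fin 5 → ZMod 2, ¬(3 ≤ hammingNorm a ∧ 3 ≤ hammingNorm b ∧ 3 ≤ hammingNorm c ∧ 3 ≤ hammingNorm (a+b) ∧ 3 ≤ hammingNorm (a+c) ∧ 3 ≤ hammingNorm (b+c) ∧ 3 ≤ hammingNorm (a+b+c)) := by decide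

lemma not_small {n : ℕ} (hn : n < 6) :
    ¬ ∃ C : Submodule (ZMod 2) (Fin n → ZMod 2),
      0 < Module.finrank (ZMod 2) C ∧ Module.finrank (ZMod 2) C < n ∧
      MinDistGE C 3 ∧ MinDistGE (dualCode C) 3 := by
  rintro ⟨C, hk0, hkn, hC, hD⟩
  have hn3 : 3 ≤ n := by
    let b := Module.finBasis (ZMod 2) C
    have := hC _ (b ⟨0, hk0⟩).2 (basis_one_ne b ⟨0, hk0⟩)
    exact le_trans this (hammingNorm_le_n _)
  interval_cases n
  · -- n = 3
    have hk : Module.finrank (ZMod 2) C = 1 ∨ Module.finrank (ZMod 2) C = 2 := by omega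
    rcases hk with hk | hk
    · obtain ⟨a, h1, h2⟩ := case_dim1 hk hC hD
      exact L1 a ⟨h1, h2⟩
    · obtain ⟨a, b, h1, h2, h3⟩ := case_dim2' (by omega) hC
      exact L5 a b ⟨h1, h2, h3⟩
  · -- n = 4
    have hk : Module.finrank (ZMod 2) C = 1 ∨ 2 ≤ Module.finrank (ZMod 2) C := by omega
    rcases hk with hk | hk
    · obtain ⟨a, h1, h2⟩ := case_dim1 hk hC hD
      exact L2 a ⟨h1, h2⟩
    · obtain ⟨a, b, h1, h2, h3⟩ := case_dim2' hk hC
      exact L6 a b ⟨h1, h2, h3⟩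
  · -- n = 5
    have hk : Module.finrank (ZMod 2) C = 1 ∨ Module.finrank (ZMod 2) C = 2 ∨
        3 ≤ Module.finrank (ZMod 2) C := by omega
    rcases hk with hk | hk | hk
    · obtain ⟨a, h1, h2⟩ := case_dim1 hk hC hD
      exact L3 a ⟨h1, h2⟩
    · obtain ⟨a, b, h1, h2, h3, h4⟩ := case_dim2 hk hC hD
      exact L4 a b ⟨h1, h2, h3, h4⟩
    · obtain ⟨a, b, c, h1, h2, h3, h4, h5, h6, h7⟩ := case_dim3 hk hC
      exact L7 a b c ⟨h1, h2, h3, h4, h5, h6, h7⟩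

theorem N_three_three : N 3 3 = 6 := by
  have h6 : (6 : ℕ) ∈ {n | ∃ C : Submodule (ZMod 2) (Fin n → ZMod 2),
      0 < Module.finrank (ZMod 2) C ∧ Module.finrank (ZMod 2) C < n ∧
      MinDistGE C 3 ∧ MinDistGE (dualCode C) 3} := ⟨C6, fr1, fr2, md1, md2⟩
  unfold N
  apply le_antisymm
  · exact Nat.sInf_le h6
  · apply le_csInf ⟨6, h6⟩
    intro n hn
    by_contra h
    exact not_small (by omega) hn
end
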